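/- Consider the ODE dx/dt = −t (Σ + t² I)^{-1}(μ − x) on ℝⁿ with Σ PSD having eigendecomposition Σ = U diag(λ₁,…,λₙ) Uᵀ, and terminal condition x(T) = x_T. Then the solution at time t ∈ [0, T] is x(t) = μ + U diag(√((λ₁+t²)/(λ₁+T²)), …, √((λₙ+t²)/(λₙ+T²))) Uᵀ (x_T − μ). -/

import Mathlib

open Matrix Set

/-- Closed-form solution of the probability flow ODE
`dx/dt = −t (S + t²I)⁻¹ (μ − x)` for a Gaussian data distribution `N(μ, S)`
with eigendecomposition `S = U diag(λ) Uᵀ` (`U` orthogonal) and terminal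
condition `x(T) = x_T`: the map
`y(t) = μ + U diag(√((λₖ + t²)/(λₖ + T²))) Uᵀ (x_T − μ)`
satisfies `y(T) = x_T` and solves the ODE on `[0, T]`. -/
theorem gaussian_pfode_solution {n : ℕ} (T : ℝ) (hT : 0 ≤ T)
    (μ xT : Fin n → ℝ) (S U : Matrix (Fin n) (Fin n) ℝ) (l : Fin n → ℝ)
    (hS : S.PosSemidef) (hU : U * Uᵀ = 1) (hl : ∀ k, 0 ≤ l k)
    (hdecomp : S = U * Matrix.diagonal l * Uᵀ)
    (hinv : ∀ t ∈ Icc (0 : ℝ) T, IsUnit (S + t ^ 2 • (1 : Matrix (Fin n) (Fin n) ℝ))) :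
    (fun t : ℝ => μ + (U * Matrix.diagonal
        (fun k => Real.sqrt ((l k + t ^ 2) / (l k + T ^ 2))) * Uᵀ).mulVec (xT - μ)) T = xT ∧
    ∀ t ∈ Icc (0 : ℝ) T,
      HasDerivAt
        (fun t : ℝ => μ + (U * Matrix.diagonal
          (fun k => Real.sqrt ((l k + t ^ 2) / (l k + T ^ 2))) * Uᵀ).mulVec (xT - μ))
        (-(t • ((S + t ^ 2 • (1 : Matrix (Fin n) (Fin n) ℝ))⁻¹.mulVec
          (μ - (μ + (U * Matrix.diagonal
            (fun k => Real.sqrt ((l k + t ^ 2) / (l k + T ^ 2))) * Uᵀ).mulVec (xT - μ))))))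
        t := by
  have hUtU : Uᵀ * U = 1 := mul_eq_one_comm.mp hU
  -- decomposition of S + t²I
  have hM : ∀ t : ℝ, S + t ^ 2 • (1 : Matrix (Fin n) (Fin n) ℝ)
      = U * Matrix.diagonal (fun k => l k + t ^ 2) * Uᵀ := by
    intro t
    have h1 : (t ^ 2 • (1 : Matrix (Fin n) (Fin n) ℝ))
        = U * (t ^ 2 • (1 : Matrix (Fin n) (Fin n) ℝ)) * Uᵀ := by
      rw [Matrix.mul_smul, Matrix.mul_one, Matrix.smul_mul, hU]
    rw [hdecomp]
    nth_rewrite 1 [h1]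
    rw [← Matrix.add_mul, ← Matrix.mul_add]
    congr 1
    congr 1
    ext i j
    by_cases h : i = j <;> simp [Matrix.diagonal, Matrix.one_apply, h]
  -- positivity of eigenvalues shifted
  have hpos : ∀ t ∈ Icc (0 : ℝ) T, ∀ k, 0 < l k + t ^ 2 := by
    intro t ht k
    have h := hinv t ht
    rw [hM t] at h
    have hdet : (U * Matrix.diagonal (fun k => l k + t ^ 2) * Uᵀ).det
        = (Matrix.diagonal (fun k => l k + t ^ 2)).det := by
      rw [Matrix.det_mul, Matrix.det_mul, mul_comm, ← mul_assoc, ← Matrix.det_mul, hUtU,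
        Matrix.det_one, one_mul]
    have hdet' : (Matrix.diagonal (fun k => l k + t ^ 2)).det ≠ 0 := by
      rw [← hdet]
      exact ((Matrix.isUnit_iff_isUnit_det _).mp h).ne_zero
    rw [Matrix.det_diagonal] at hdet'
    have := Finset.prod_ne_zero_iff.mp hdet' k (Finset.mem_univ k)
    exact lt_of_le_of_ne (add_nonneg (hl k) (sq_nonneg t)) (Ne.symm this)
  have hTmem : T ∈ Icc (0 : ℝ) T := ⟨hT, le_refl T⟩
  have hcpos : ∀ k, 0 < l k + T ^ 2 := hpos T hTmem
  constructor
  · -- terminal condition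
    have : (Matrix.diagonal fun k => Real.sqrt ((l k + T ^ 2) / (l k + T ^ 2)))
        = (1 : Matrix (Fin n) (Fin n) ℝ) := by
      ext i j
      by_cases h : i = j <;>
        simp [Matrix.diagonal, Matrix.one_apply, h, div_self (hcpos j).ne']
    simp only [this, Matrix.mul_one, hU, Matrix.one_mulVec]
    abel
  · intro t ht
    have htpos : ∀ k, 0 < l k + t ^ 2 := hpos t ht
    set d : Fin n → ℝ := fun k => Real.sqrt ((l k + t ^ 2) / (l k + T ^ 2)) with hd
    -- inverse formula
    have hinveq : (S + t ^ 2 • (1 : Matrix (Fin n) (Fin n) ℝ))⁻¹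
        = U * Matrix.diagonal (fun k => (l k + t ^ 2)⁻¹) * Uᵀ := by
      apply Matrix.inv_eq_right_inv
      rw [hM t]
      calc U * Matrix.diagonal (fun k => l k + t ^ 2) * Uᵀ *
            (U * Matrix.diagonal (fun k => (l k + t ^ 2)⁻¹) * Uᵀ)
          = U * (Matrix.diagonal (fun k => l k + t ^ 2) *
            ((Uᵀ * U) * (Matrix.diagonal (fun k => (l k + t ^ 2)⁻¹) * Uᵀ))) := by
            simp only [Matrix.mul_assoc]
        _ = 1 := by
            rw [hUtU, Matrix.one_mul, ← Matrix.mul_assoc,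
              ← Matrix.mul_assoc, Matrix.mul_assoc U, Matrix.diagonal_mul_diagonal]
            have : (fun k => (l k + t ^ 2) * (l k + t ^ 2)⁻¹) = fun _ : Fin n => (1:ℝ) := by
              funext k; exact mul_inv_cancel₀ (htpos k).ne'
            rw [this, Matrix.diagonal_one, Matrix.mul_one, hU]
    -- the claimed derivative equals a nicer expression
    set v : Fin n → ℝ := xT - μ with hv
    set w : Fin n → ℝ := Uᵀ.mulVec v with hw
    have hsimp : ∀ (e : Fin n → ℝ) (x : Fin n → ℝ),
        (U * Matrix.diagonal e * Uᵀ).mulVec x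
          = U.mulVec (fun k => e k * (Uᵀ.mulVec x) k) := by
      intro e x
      have h2 : Matrix.diagonal e *ᵥ (Uᵀ *ᵥ x) = fun k => e k * (Uᵀ *ᵥ x) k := by
        funext k; rw [Matrix.mulVec_diagonal]
      rw [← Matrix.mulVec_mulVec, ← Matrix.mulVec_mulVec, h2]
    -- component formula
    have hcomp : ∀ (z : Fin n → ℝ) (i : Fin n),
        U.mulVec z i = ∑ k, U i k * z k := by
      intro z i; rfl
    -- target derivative rewrite
    have hderiv_eq :
        (-(t • ((S + t ^ 2 • (1 : Matrix (Fin n) (Fin n) ℝ))⁻¹.mulVec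
          (μ - (μ + (U * Matrix.diagonal d * Uᵀ).mulVec v)))))
        = U.mulVec (fun k => t * ((l k + t ^ 2)⁻¹ * d k) * w k) := by
      have h1 : μ - (μ + (U * Matrix.diagonal d * Uᵀ).mulVec v)
          = -((U * Matrix.diagonal d * Uᵀ).mulVec v) := by
        funext i; simp
      rw [h1, hinveq, Matrix.mulVec_neg, smul_neg, neg_neg, hsimp]
      rw [show (U * Matrix.diagonal d * Uᵀ).mulVec v
          = U.mulVec (fun k => d k * w k) from hsimp d v]
      rw [Matrix.mulVec_mulVec, hUtU, Matrix.one_mulVec]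
      have h3 : (fun k => t * ((l k + t ^ 2)⁻¹ * d k) * w k)
          = t • fun k => (l k + t ^ 2)⁻¹ * (d k * w k) := by
        funext k; simp only [Pi.smul_apply, smul_eq_mul]; ring
      rw [h3, Matrix.mulVec_smul]
    rw [hderiv_eq]
    -- derivative of each sqrt factor
    have hsqrt : ∀ k, HasDerivAt (fun s : ℝ => Real.sqrt ((l k + s ^ 2) / (l k + T ^ 2)))
        (t * ((l k + t ^ 2)⁻¹ * d k)) t := by
      intro k
      have hu : HasDerivAt (fun s : ℝ => (l k + s ^ 2) / (l k + T ^ 2))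
          (2 * t / (l k + T ^ 2)) t := by
        have h0 : HasDerivAt (fun s : ℝ => l k + s ^ 2) (2 * t) t := by
          simpa using (hasDerivAt_pow 2 t).const_add (l k)
        exact h0.div_const _
      have hne : (l k + t ^ 2) / (l k + T ^ 2) ≠ 0 :=
        ne_of_gt (div_pos (htpos k) (hcpos k))
      have hcomp := hu.sqrt hne
      convert hcomp using 1
      have hdpos : 0 < d k := Real.sqrt_pos.mpr (div_pos (htpos k) (hcpos k))
      have hs2 : d k ^ 2 * (l k + T ^ 2) = l k + t ^ 2 := by
        rw [hd]
        rw [Real.sq_sqrt (le_of_lt (div_pos (htpos k) (hcpos k)))]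
        exact div_mul_cancel₀ _ (hcpos k).ne'
      have ha := (htpos k).ne'
      have hc := (hcpos k).ne'
      have hdne := hdpos.ne'
      field_simp
      have e : Real.sqrt ((l k + t ^ 2) / (l k + T ^ 2)) = d k := rfl
      rw [e]
      field_simp
      linear_combination t * hs2
    -- rewrite the function in component form
    have hf : (fun s : ℝ => μ + (U * Matrix.diagonal
          (fun k => Real.sqrt ((l k + s ^ 2) / (l k + T ^ 2))) * Uᵀ).mulVec v)
        = fun s : ℝ => fun i =>
            μ i + ∑ k, U i k * (Real.sqrt ((l k + s ^ 2) / (l k + T ^ 2)) * w k) := by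
      funext s
      rw [hsimp]
      funext i
      simp only [Pi.add_apply]
      rw [hcomp]
    rw [hf]
    apply hasDerivAt_pi.mpr
    intro i
    rw [hcomp]
    exact HasDerivAt.const_add _ (HasDerivAt.fun_sum fun k _ =>
      ((hsqrt k).mul_const (w k)).const_mul (U i k))
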